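/- For every n ≥ 6, the quantity C_{P,2̄,n} satisfies the pure recurrence C_{P,2̄,n} = C_{P,2̄,n−1} + C_{P,2̄,n−3} + C_{P,2̄,n−4} + C_{P,2̄,n−5}. -/

import Mathlib

/-- A Roman dominating function: every vertex with value 0 has a neighbor with value 2. -/
def IsRDF {V : Type*} (G : SimpleGraph V) (f : V → Fin 3) : Prop :=
  ∀ v, f v = 0 → ∃ u, G.Adj v u ∧ f u = 2

/-- A minimal Roman dominating function: an rdf such that no rdf `g ≠ f` satisfies `g ≤ f`. -/
def IsMinimalRDF {V : Type*} (G : SimpleGraph V) (f : V → Fin 3) : Prop :=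
  IsRDF G f ∧ ∀ g : V → Fin 3, IsRDF G g → g ≤ f → g = f

/-- The number of minimal Roman dominating functions of `G`. -/
noncomputable def numMinRDF {V : Type*} (G : SimpleGraph V) : ℕ :=
  {f : V → Fin 3 | IsMinimalRDF G f}.ncard

/-- `C_{P,n}`: the number of minimal Roman dominating functions of the path `Pₙ`. -/
noncomputable def CP (n : ℕ) : ℕ := numMinRDF (SimpleGraph.pathGraph n)

/-- `C_{P,2,n}`: the number of minimal rdf `f` of `Pₙ` with `f(v₁) = 2`. -/
noncomputable def CP2 (n : ℕ) : ℕ :=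
  {f : Fin n → Fin 3 | IsMinimalRDF (SimpleGraph.pathGraph n) f ∧
    ∃ h : 0 < n, f ⟨0, h⟩ = 2}.ncard

/-- `C_{P,2̄,n}`: the number of minimal rdf `f` of `Pₙ` with `f(v₁) ≠ 2`. -/
noncomputable def CPbar2 (n : ℕ) : ℕ :=
  {f : Fin n → Fin 3 | IsMinimalRDF (SimpleGraph.pathGraph n) f ∧
    ∀ h : 0 < n, f ⟨0, h⟩ ≠ 2}.ncard

lemma fin3_tri (v : Fin 3) : v = 0 ∨ v = 1 ∨ v = 2 := by revert v; decide

lemma fin3_le {a b : Fin 3} (h : a ≤ b) : a.val ≤ b.val := h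

lemma isMinimalRDF_iff {V : Type*} [DecidableEq V] (G : SimpleGraph V) (f : V → Fin 3) :
    IsMinimalRDF G f ↔ IsRDF G f ∧
      (∀ v, f v = 1 → ∀ u, G.Adj v u → f u ≠ 2) ∧
      (∀ v, f v = 2 → ∃ u, G.Adj v u ∧ f u = 0 ∧ ∀ w, G.Adj u w → w ≠ v → f w ≠ 2) := by
  constructor
  · rintro ⟨hrdf, hmin⟩
    refine ⟨hrdf, ?_, ?_⟩
    · intro v hv u hadj hu
      -- lower f at v to 0
      set g := Function.update f v 0 with hg
      have hgle : g ≤ f := by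
        intro w
        by_cases hw : w = v
        · subst hw; simp [hg, hv]
        · simp [hg, Function.update_of_ne hw]
      have hgrdf : IsRDF G g := by
        intro w hw
        by_cases hwv : w = v
        · subst hwv
          refine ⟨u, hadj, ?_⟩
          have huv : u ≠ w := by
            intro h; rw [h] at hu; rw [hu] at hv; exact absurd hv (by decide)
          simpa [hg, Function.update_of_ne huv] using hu
        · have hfw : f w = 0 := by simpa [hg, Function.update_of_ne hwv] using hw
          obtain ⟨u', hadj', hu'⟩ := hrdf w hfw
          have hu'v : u' ≠ v := by
            intro h; rw [h] at hu'; rw [hu'] at hv; exact absurd hv (by decide)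
          exact ⟨u', hadj', by simpa [hg, Function.update_of_ne hu'v] using hu'⟩
      have := hmin g hgrdf hgle
      have : g v = f v := congrFun this v
      rw [hv] at this
      simp [hg] at this
    · intro v hv
      by_contra hnp
      push_neg at hnp
      -- lower f at v to 1
      set g := Function.update f v 1 with hg
      have hgle : g ≤ f := by
        intro w
        by_cases hw : w = v
        · subst hw; simp [hg, hv, Fin.le_def]
        · simp [hg, Function.update_of_ne hw]
      have hgrdf : IsRDF G g := by
        intro w hw
        have hwv : w ≠ v := by
          intro h; rw [h] at hw; simp [hg] at hw
        have hfw : f w = 0 := by simpa [hg, Function.update_of_ne hwv] using hw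
        obtain ⟨u', hadj', hu'⟩ := hrdf w hfw
        by_cases hu'v : u' = v
        · subst hu'v
          obtain ⟨w', hadj'', hw'ne, hw'⟩ := hnp w (G.adj_symm hadj') hfw
          have hw'v : w' ≠ u' := hw'ne
          exact ⟨w', hadj'', by simpa [hg, Function.update_of_ne hw'v] using hw'⟩
        · exact ⟨u', hadj', by simpa [hg, Function.update_of_ne hu'v] using hu'⟩
      have := hmin g hgrdf hgle
      have : g v = f v := congrFun this v
      rw [hv] at this
      simp [hg] at this
  · rintro ⟨hrdf, h1, h2⟩
    refine ⟨hrdf, ?_⟩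
    intro g hgrdf hgle
    funext v
    by_contra hne
    have hlt : (g v).val < (f v).val := lt_of_le_of_ne (fin3_le (hgle v)) (fun h => hne (Fin.ext h))
    rcases fin3_tri (f v) with hf | hf | hf
    · rw [hf] at hlt; simp at hlt
    · -- f v = 1, g v = 0
      have hg0 : g v = 0 := by
        rw [hf] at hlt
        have := (g v).isLt
        exact Fin.ext (by omega)
      obtain ⟨u, hadj, hu⟩ := hgrdf v hg0
      have : (f u).val = 2 := by
        have := fin3_le (hgle u)
        rw [hu] at this
        have := (f u).isLt
        omega
      exact h1 v hf u hadj (Fin.ext this)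
    · -- f v = 2, g v ≤ 1
      obtain ⟨u, hadj, hu0, hpriv⟩ := h2 v hf
      have hgu : g u = 0 := by
        have := fin3_le (hgle u)
        rw [hu0] at this
        exact Fin.ext (by omega)
      obtain ⟨w, hadjw, hw⟩ := hgrdf u hgu
      have hfw : f w = 2 := by
        have := fin3_le (hgle w)
        rw [hw] at this
        have := (f w).isLt
        exact Fin.ext (by omega)
      have hwv : w ≠ v := by
        intro h; subst h
        rw [hf] at hlt; rw [hw] at hlt; simp at hlt
      exact hpriv w hadjw hwv hfw

inductive St : Type
  | I | ZN | ZO | ZG | O | TM | TU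
deriving DecidableEq

open St

instance : Fintype St :=
  ⟨⟨↑[I, ZN, ZO, ZG, O, TM, TU], by decide⟩, fun x => by cases x <;> decide⟩

def tr : St → Fin 3 → Option St
  | I, 0 => some ZN
  | I, 1 => some O
  | I, 2 => none
  | ZN, 0 => none
  | ZN, 1 => none
  | ZN, 2 => some TM
  | ZO, 0 => some ZN
  | ZO, 1 => some O
  | ZO, 2 => some TU
  | ZG, 0 => some ZN
  | ZG, 1 => some O
  | ZG, 2 => none
  | O, 0 => some ZN
  | O, 1 => some O
  | O, 2 => none
  | TM, 0 => some ZO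
  | TM, 1 => none
  | TM, 2 => some TU
  | TU, 0 => some ZG
  | TU, 1 => none
  | TU, 2 => none

def accb : St → Bool
  | ZO => true | ZG => true | O => true | TM => true | _ => false

def runN : ℕ → (ℕ → Fin 3) → Option St
  | 0, _ => some I
  | n+1, f => (runN n f).bind (fun s => tr s (f n))

lemma runN_congr {n : ℕ} {f g : ℕ → Fin 3} (h : ∀ i < n, f i = g i) :
    runN n f = runN n g := by
  induction n with
  | zero => rfl
  | succ m ih =>
    simp only [runN]
    rw [ih (fun i hi => h i (by omega)), h m (by omega)]

lemma runN_ne_I {n : ℕ} (hn : 1 ≤ n) (f : ℕ → Fin 3) : runN n f ≠ some I := by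
  obtain ⟨m, rfl⟩ : ∃ m, n = m + 1 := ⟨n - 1, by omega⟩
  simp only [runN]
  intro h
  rw [Option.bind_eq_some_iff] at h
  obtain ⟨s, _, hs⟩ := h
  revert hs
  rcases fin3_tri (f m) with h | h | h <;> rw [h] <;> cases s <;> decide

-- semantic predicates
def LeftOpt (f : ℕ → Fin 3) (i : ℕ) : Prop :=
  0 < i ∧ f (i-1) = 0 ∧ (2 ≤ i → f (i-2) ≠ 2)

def CoreN (n : ℕ) (f : ℕ → Fin 3) : Prop :=
  f 0 ≠ 2 ∧
  (∀ i < n, f i = 1 → (0 < i → f (i-1) ≠ 2) ∧ (i+1 < n → f (i+1) ≠ 2)) ∧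
  (∀ i, i+1 < n → f i = 0 → (0 < i ∧ f (i-1) = 2) ∨ f (i+1) = 2) ∧
  (∀ i, i+2 < n → f i = 2 → LeftOpt f i ∨ (f (i+1) = 0 ∧ f (i+2) ≠ 2))

def Sem : St → ℕ → (ℕ → Fin 3) → Prop
  | I, _, _ => False
  | ZN, n, f => CoreN n f ∧ f (n-1) = 0 ∧ (2 ≤ n → f (n-2) ≠ 2)
  | ZO, n, f => CoreN n f ∧ f (n-1) = 0 ∧ 2 ≤ n ∧ f (n-2) = 2 ∧ LeftOpt f (n-2)
  | ZG, n, f => CoreN n f ∧ f (n-1) = 0 ∧ 2 ≤ n ∧ f (n-2) = 2 ∧ ¬ LeftOpt f (n-2)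
  | O, n, f => CoreN n f ∧ f (n-1) = 1
  | TM, n, f => CoreN n f ∧ f (n-1) = 2 ∧ LeftOpt f (n-1) ∧ (2 ≤ n → f (n-2) = 2 → LeftOpt f (n-2))
  | TU, n, f => CoreN n f ∧ f (n-1) = 2 ∧ ¬ LeftOpt f (n-1) ∧ (2 ≤ n → f (n-2) = 2 → LeftOpt f (n-2))

def ValidN (n : ℕ) (f : ℕ → Fin 3) : Prop :=
  f 0 ≠ 2 ∧
  (∀ i < n, f i = 1 → (0 < i → f (i-1) ≠ 2) ∧ (i+1 < n → f (i+1) ≠ 2)) ∧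
  (∀ i < n, f i = 0 → (0 < i ∧ f (i-1) = 2) ∨ (i+1 < n ∧ f (i+1) = 2)) ∧
  (∀ i < n, f i = 2 → LeftOpt f i ∨ (i+1 < n ∧ f (i+1) = 0 ∧ (i+2 < n → f (i+2) ≠ 2)))

lemma core_mono {n m : ℕ} (h : m ≤ n) {f : ℕ → Fin 3} (hc : CoreN n f) : CoreN m f := by
  obtain ⟨h0, h1, h2, h3⟩ := hc
  refine ⟨h0, fun i hi hfi => ?_, fun i hi hfi => h2 i (by omega) hfi, fun i hi hfi => h3 i (by omega) hfi⟩
  obtain ⟨a, b⟩ := h1 i (by omega) hfi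
  exact ⟨a, fun hlt => b (by omega)⟩

lemma core_succ {n : ℕ} (hn : 1 ≤ n) (f : ℕ → Fin 3) :
    CoreN (n+1) f ↔ CoreN n f ∧
      (f n = 1 → f (n-1) ≠ 2) ∧ (f (n-1) = 1 → f n ≠ 2) ∧
      (f (n-1) = 0 → (0 < n-1 ∧ f (n-2) = 2) ∨ f n = 2) ∧
      (2 ≤ n → f (n-2) = 2 → LeftOpt f (n-2) ∨ (f (n-1) = 0 ∧ f n ≠ 2)) := by
  obtain ⟨b, rfl⟩ : ∃ b, n = b + 1 := ⟨n - 1, by omega⟩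
  have eb1 : b + 1 - 1 = b := by omega
  have eb2 : b + 1 + 1 = b + 2 := by omega
  constructor
  · rintro ⟨h0, h1, h2, h3⟩
    refine ⟨⟨h0, fun i hi hfi => ?_, fun i hi hfi => h2 i (by omega) hfi,
        fun i hi hfi => h3 i (by omega) hfi⟩, ?_, ?_, ?_, ?_⟩
    · obtain ⟨a, c⟩ := h1 i (by omega) hfi
      exact ⟨a, fun hlt => c (by omega)⟩
    · intro hb1 
      rw [eb1]
      exact (h1 (b+1) (by omega) hb1).1 (by omega)
    · rw [eb1]
      intro hb
      have := (h1 b (by omega) hb).2 (by omega)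
      exact this
    · rw [eb1]
      intro hb
      have := h2 b (by omega) hb
      rcases this with ⟨hp, hq⟩ | hq
      · left; exact ⟨by omega, by simpa using hq⟩
      · right; exact hq
    · intro h2n hb2
      have hb : b - 1 + 2 < b + 1 + 1 := by omega
      have e1 : b - 1 + 1 = b := by omega
      have e2 : b - 1 + 2 = b + 1 := by omega
      have := h3 (b-1) hb (by simpa using hb2)
      rw [e1, e2] at this
      simpa [eb1] using this
  · rintro ⟨⟨h0, h1, h2, h3⟩, g1, g2, g3, g4⟩
    rw [eb1] at g1 g2 g3
    refine ⟨h0, ?_, ?_, ?_⟩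
    · intro i hi hfi
      rcases Nat.lt_or_ge i (b+1) with hib | hib
      · obtain ⟨a, c⟩ := h1 i hib hfi
        refine ⟨a, fun hlt => ?_⟩
        rcases Nat.lt_or_ge (i+1) (b+1) with h' | h'
        · exact c h'
        · have : i = b := by omega
          subst this
          exact g2 hfi
      · have : i = b + 1 := by omega
        subst this
        refine ⟨fun _ => by simpa [eb1] using g1 hfi, fun hlt => by omega⟩
    · intro i hi hfi
      rcases Nat.lt_or_ge (i+1) (b+1) with h' | h'
      · exact h2 i h' hfi
      · have : i = b := by omega
        subst this
        rcases g3 hfi with ⟨hp, hq⟩ | hq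
        · left; exact ⟨by omega, by simpa using hq⟩
        · right; exact hq
    · intro i hi hfi
      rcases Nat.lt_or_ge (i+2) (b+1) with h' | h'
      · exact h3 i h' hfi
      · have hib : i = b - 1 := by omega
        have h2n : 2 ≤ b + 1 := by omega
        subst hib
        have e1 : b - 1 + 1 = b := by omega
        have e2 : b - 1 + 2 = b + 1 := by omega
        rcases g4 h2n (by simpa using hfi) with hl | ⟨hp, hq⟩
        · left; simpa using hl
        · right; rw [e1, e2]; exact ⟨hp, hq⟩

lemma clash {C : Prop} {x a b : Fin 3} (h1 : x = a) (h2 : x = b) (hab : a ≠ b) : C :=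
  (absurd (h1.symm.trans h2) hab : False).elim

lemma sem_step_sound {n : ℕ} (hn : 1 ≤ n) {f : ℕ → Fin 3} {s s' : St}
    (h : Sem s n f) (ht : tr s (f n) = some s') : Sem s' (n+1) f := by
  have e1 : n + 1 - 1 = n := by omega
  have e2 : n + 1 - 2 = n - 1 := by omega
  have e3 : n - 1 - 1 = n - 2 := by omega
  cases s
  case I => exact h.elim
  case ZN =>
    obtain ⟨hC, hb, hP⟩ := h
    rcases fin3_tri (f n) with hx | hx | hx <;> rw [hx] at ht
    · exact (by simp [tr] at ht)
    · exact (by simp [tr] at ht)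
    · obtain rfl : TM = s' := Option.some.inj ht
      simp only [Sem, e1, e2]
      refine ⟨(core_succ hn f).mpr ⟨hC, ?_, ?_, ?_, ?_⟩, hx, ⟨by omega, hb, hP⟩, ?_⟩
      · intro h'; exact clash hx h' (by decide)
      · intro h'; exact clash hb h' (by decide)
      · intro _; exact Or.inr hx
      · intro h2n hf2; exact absurd hf2 (hP h2n)
      · intro _ h'; exact clash hb h' (by decide)
  case ZO =>
    obtain ⟨hC, hb, h2n, hp2, hL⟩ := h
    have g3 : f (n-1) = 0 → (0 < n - 1 ∧ f (n-2) = 2) ∨ f n = 2 :=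
      fun _ => Or.inl ⟨by omega, hp2⟩
    have g4 : 2 ≤ n → f (n-2) = 2 → LeftOpt f (n-2) ∨ (f (n-1) = 0 ∧ f n ≠ 2) :=
      fun _ _ => Or.inl hL
    rcases fin3_tri (f n) with hx | hx | hx <;> rw [hx] at ht
    · obtain rfl : ZN = s' := Option.some.inj ht
      simp only [Sem, e1, e2]
      refine ⟨(core_succ hn f).mpr ⟨hC, ?_, ?_, g3, g4⟩, hx, ?_⟩
      · intro h'; exact clash hx h' (by decide)
      · intro h'; exact clash hb h' (by decide)
      · intro _ h'; exact clash hb h' (by decide)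
    · obtain rfl : O = s' := Option.some.inj ht
      simp only [Sem, e1]
      refine ⟨(core_succ hn f).mpr ⟨hC, ?_, ?_, g3, g4⟩, hx⟩
      · intro _; rw [hb]; decide
      · intro h'; exact clash hb h' (by decide)
    · obtain rfl : TU = s' := Option.some.inj ht
      simp only [Sem, e1, e2]
      refine ⟨(core_succ hn f).mpr ⟨hC, ?_, ?_, fun _ => Or.inr hx, g4⟩, hx, ?_, ?_⟩
      · intro h'; exact clash hx h' (by decide)
      · intro h'; exact clash hb h' (by decide)
      · rintro ⟨-, -, q⟩; exact (q h2n) hp2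
      · intro _ h'; exact clash hb h' (by decide)
  case ZG =>
    obtain ⟨hC, hb, h2n, hp2, hL⟩ := h
    have g3 : f (n-1) = 0 → (0 < n - 1 ∧ f (n-2) = 2) ∨ f n = 2 :=
      fun _ => Or.inl ⟨by omega, hp2⟩
    rcases fin3_tri (f n) with hx | hx | hx <;> rw [hx] at ht
    · obtain rfl : ZN = s' := Option.some.inj ht
      simp only [Sem, e1, e2]
      refine ⟨(core_succ hn f).mpr ⟨hC, ?_, ?_, g3, ?_⟩, hx, ?_⟩
      · intro h'; exact clash hx h' (by decide)
      · intro h'; exact clash hb h' (by decide)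
      · intro _ _; exact Or.inr ⟨hb, by rw [hx]; decide⟩
      · intro _ h'; exact clash hb h' (by decide)
    · obtain rfl : O = s' := Option.some.inj ht
      simp only [Sem, e1]
      refine ⟨(core_succ hn f).mpr ⟨hC, ?_, ?_, g3, ?_⟩, hx⟩
      · intro _; rw [hb]; decide
      · intro h'; exact clash hb h' (by decide)
      · intro _ _; exact Or.inr ⟨hb, by rw [hx]; decide⟩
    · exact (by simp [tr] at ht)
  case O =>
    obtain ⟨hC, hb⟩ := h
    have g4 : 2 ≤ n → f (n-2) = 2 → LeftOpt f (n-2) ∨ (f (n-1) = 0 ∧ f n ≠ 2) := by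
      intro h2n hf2
      have := (hC.2.1 (n-1) (by omega) hb).1 (by omega)
      rw [e3] at this
      exact absurd hf2 this
    rcases fin3_tri (f n) with hx | hx | hx <;> rw [hx] at ht
    · obtain rfl : ZN = s' := Option.some.inj ht
      simp only [Sem, e1, e2]
      refine ⟨(core_succ hn f).mpr ⟨hC, ?_, ?_, ?_, g4⟩, hx, ?_⟩
      · intro h'; exact clash hx h' (by decide)
      · intro _; rw [hx]; decide
      · intro h'; exact clash hb h' (by decide)
      · intro _; rw [hb]; decide
    · obtain rfl : O = s' := Option.some.inj ht
      simp only [Sem, e1]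
      refine ⟨(core_succ hn f).mpr ⟨hC, ?_, ?_, ?_, g4⟩, hx⟩
      · intro _; rw [hb]; decide
      · intro _; rw [hx]; decide
      · intro h'; exact clash hb h' (by decide)
    · exact (by simp [tr] at ht)
  case TM =>
    obtain ⟨hC, hb, hL1, hG⟩ := h
    have g4 : 2 ≤ n → f (n-2) = 2 → LeftOpt f (n-2) ∨ (f (n-1) = 0 ∧ f n ≠ 2) :=
      fun h2n hf2 => Or.inl (hG h2n hf2)
    rcases fin3_tri (f n) with hx | hx | hx <;> rw [hx] at ht
    · obtain rfl : ZO = s' := Option.some.inj ht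
      simp only [Sem, e1, e2]
      refine ⟨(core_succ hn f).mpr ⟨hC, ?_, ?_, ?_, g4⟩, hx, by omega, hb, hL1⟩
      · intro h'; exact clash hx h' (by decide)
      · intro h'; exact clash hb h' (by decide)
      · intro h'; exact clash hb h' (by decide)
    · exact (by simp [tr] at ht)
    · obtain rfl : TU = s' := Option.some.inj ht
      simp only [Sem, e1, e2]
      refine ⟨(core_succ hn f).mpr ⟨hC, ?_, ?_, ?_, g4⟩, hx, ?_, fun _ _ => hL1⟩
      · intro h'; exact clash hx h' (by decide)
      · intro h'; exact clash hb h' (by decide)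
      · intro h'; exact clash hb h' (by decide)
      · rintro ⟨-, q, -⟩; exact clash hb q (by decide)
  case TU =>
    obtain ⟨hC, hb, hL1, hG⟩ := h
    have g4 : 2 ≤ n → f (n-2) = 2 → LeftOpt f (n-2) ∨ (f (n-1) = 0 ∧ f n ≠ 2) :=
      fun h2n hf2 => Or.inl (hG h2n hf2)
    rcases fin3_tri (f n) with hx | hx | hx <;> rw [hx] at ht
    · obtain rfl : ZG = s' := Option.some.inj ht
      simp only [Sem, e1, e2]
      refine ⟨(core_succ hn f).mpr ⟨hC, ?_, ?_, ?_, g4⟩, hx, by omega, hb, hL1⟩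
      · intro h'; exact clash hx h' (by decide)
      · intro h'; exact clash hb h' (by decide)
      · intro h'; exact clash hb h' (by decide)
    · exact (by simp [tr] at ht)
    · exact (by simp [tr] at ht)

lemma sem_core {s : St} {n : ℕ} {f : ℕ → Fin 3} (h : Sem s n f) : CoreN n f := by
  cases s
  case I => exact h.elim
  all_goals exact h.1

instance (f : ℕ → Fin 3) (i : ℕ) : Decidable (LeftOpt f i) := by
  unfold LeftOpt; infer_instance

def semOf (n : ℕ) (f : ℕ → Fin 3) : St :=
  if f (n-1) = 0 then
    (if 2 ≤ n ∧ f (n-2) = 2 then (if LeftOpt f (n-2) then ZO else ZG) else ZN)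
  else if f (n-1) = 1 then O
  else if LeftOpt f (n-1) then TM else TU

lemma sem_eq_semOf {n : ℕ} {f : ℕ → Fin 3} {s : St} (h : Sem s n f) : s = semOf n f := by
  cases s
  case I => exact h.elim
  case ZN =>
    obtain ⟨-, hb, hP⟩ := h
    rw [semOf, if_pos hb, if_neg (fun h2 => hP h2.1 h2.2)]
  case ZO =>
    obtain ⟨-, hb, h2n, hp2, hL⟩ := h
    rw [semOf, if_pos hb, if_pos ⟨h2n, hp2⟩, if_pos hL]
  case ZG =>
    obtain ⟨-, hb, h2n, hp2, hL⟩ := h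
    rw [semOf, if_pos hb, if_pos ⟨h2n, hp2⟩, if_neg hL]
  case O =>
    obtain ⟨-, hb⟩ := h
    rw [semOf, if_neg (fun h' => clash hb h' (by decide)), if_pos hb]
  case TM =>
    obtain ⟨-, hb, hL, -⟩ := h
    rw [semOf, if_neg (fun h' => clash hb h' (by decide)),
      if_neg (fun h' => clash hb h' (by decide)), if_pos hL]
  case TU =>
    obtain ⟨-, hb, hL, -⟩ := h
    rw [semOf, if_neg (fun h' => clash hb h' (by decide)),
      if_neg (fun h' => clash hb h' (by decide)), if_neg hL]

lemma sem_excl {n : ℕ} {f : ℕ → Fin 3} {s s' : St} (h : Sem s n f) (h' : Sem s' n f) :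
    s = s' :=
  (sem_eq_semOf h).trans (sem_eq_semOf h').symm

lemma sem_restrict {n : ℕ} (hn : 1 ≤ n) {f : ℕ → Fin 3} (hc : CoreN (n+1) f) :
    ∃ s, Sem s n f := by
  have hcn : CoreN n f := core_mono (by omega) hc
  rcases fin3_tri (f (n-1)) with hb | hb | hb
  · by_cases h2 : 2 ≤ n ∧ f (n-2) = 2
    · by_cases hL : LeftOpt f (n-2)
      · exact ⟨ZO, hcn, hb, h2.1, h2.2, hL⟩
      · exact ⟨ZG, hcn, hb, h2.1, h2.2, hL⟩
    · exact ⟨ZN, hcn, hb, fun h2n => fun hp2 => h2 ⟨h2n, hp2⟩⟩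
  · exact ⟨O, hcn, hb⟩
  · have hG : 2 ≤ n → f (n-2) = 2 → LeftOpt f (n-2) := by
      intro h2n hp2
      have e1 : n - 2 + 1 = n - 1 := by omega
      have e2 : n - 2 + 2 = n := by omega
      have := hc.2.2.2 (n-2) (by omega) hp2
      rw [e1, e2] at this
      rcases this with hL | ⟨hz, -⟩
      · exact hL
      · exact clash hb hz (by decide)
    by_cases hL : LeftOpt f (n-1)
    · exact ⟨TM, hcn, hb, hL, hG⟩
    · exact ⟨TU, hcn, hb, hL, hG⟩

lemma sem_step_dead {n : ℕ} (hn : 1 ≤ n) {f : ℕ → Fin 3} {s : St}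
    (h : Sem s n f) (ht : tr s (f n) = none) (s' : St) (h' : Sem s' (n+1) f) : False := by
  have e1 : n + 1 - 1 = n := by omega
  have e2 : n + 1 - 2 = n - 1 := by omega
  obtain ⟨-, g1, g2, g3, g4⟩ := (core_succ hn f).mp (sem_core h')
  cases s
  case I => exact h.elim
  case ZN =>
    obtain ⟨hC, hb, hP⟩ := h
    rcases fin3_tri (f n) with hx | hx | hx <;> rw [hx] at ht
    · rcases g3 hb with ⟨hpos, hp2⟩ | hz
      · exact absurd hp2 (hP (by omega))
      · exact clash hx hz (by decide)
    · rcases g3 hb with ⟨hpos, hp2⟩ | hz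
      · exact absurd hp2 (hP (by omega))
      · exact clash hx hz (by decide)
    · exact (by simp [tr] at ht)
  case ZO =>
    rcases fin3_tri (f n) with hx | hx | hx <;> rw [hx] at ht <;> exact (by simp [tr] at ht)
  case ZG =>
    obtain ⟨hC, hb, h2n, hp2, hL⟩ := h
    rcases fin3_tri (f n) with hx | hx | hx <;> rw [hx] at ht
    · exact (by simp [tr] at ht)
    · exact (by simp [tr] at ht)
    · rcases g4 h2n hp2 with hL' | ⟨-, hz⟩
      · exact hL hL'
      · exact hz hx
  case O =>
    obtain ⟨hC, hb⟩ := h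
    rcases fin3_tri (f n) with hx | hx | hx <;> rw [hx] at ht
    · exact (by simp [tr] at ht)
    · exact (by simp [tr] at ht)
    · exact (g2 hb) hx
  case TM =>
    obtain ⟨hC, hb, hL1, hG⟩ := h
    rcases fin3_tri (f n) with hx | hx | hx <;> rw [hx] at ht
    · exact (by simp [tr] at ht)
    · exact (g1 hx) hb
    · exact (by simp [tr] at ht)
  case TU =>
    obtain ⟨hC, hb, hL1, hG⟩ := h
    rcases fin3_tri (f n) with hx | hx | hx <;> rw [hx] at ht
    · exact (by simp [tr] at ht)
    · exact (g1 hx) hb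
    · -- f n = 2 : only TM/TU possible for s', guard contradicts ¬LeftOpt (n-1)
      have hx' : f (n + 1 - 1) = 2 := by rw [e1]; exact hx
      cases s'
      case I => exact h'.elim
      case ZN => exact clash h'.2.1 hx' (by decide)
      case ZO => exact clash h'.2.1 hx' (by decide)
      case ZG => exact clash h'.2.1 hx' (by decide)
      case O => exact clash h'.2 hx' (by decide)
      case TM =>
        have := h'.2.2.2 (by omega)
        rw [e2] at this
        exact hL1 (this hb)
      case TU =>
        have := h'.2.2.2 (by omega)
        rw [e2] at this
        exact hL1 (this hb)

lemma coreN_one {f : ℕ → Fin 3} (h : f 0 ≠ 2) : CoreN 1 f := by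
  refine ⟨h, ?_, ?_, ?_⟩
  · intro i hi hfi
    exact ⟨fun h0 => by omega, fun h1 => by omega⟩
  · intro i hi; omega
  · intro i hi; omega

lemma runN_sem : ∀ n, 1 ≤ n → ∀ f : ℕ → Fin 3, ∀ s : St, (runN n f = some s ↔ Sem s n f) := by
  intro n
  induction n with
  | zero => omega
  | succ m ih =>
    intro _ f s
    rcases Nat.eq_zero_or_pos m with hm | hm
    · -- base case n = 1
      subst hm
      have hrun : runN 1 f = tr I (f 0) := rfl
      rcases fin3_tri (f 0) with hx | hx | hx
      · rw [hrun, hx]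
        have hsem : Sem ZN 1 f := ⟨coreN_one (by rw [hx]; decide), hx, fun h => by omega⟩
        constructor
        · intro h
          obtain rfl : ZN = s := Option.some.inj h
          exact hsem
        · intro h
          obtain rfl : s = ZN := (sem_excl h hsem)
          rfl
      · rw [hrun, hx]
        have hsem : Sem O 1 f := ⟨coreN_one (by rw [hx]; decide), hx⟩
        constructor
        · intro h
          obtain rfl : O = s := Option.some.inj h
          exact hsem
        · intro h
          obtain rfl : s = O := (sem_excl h hsem)
          rfl
      · rw [hrun, hx]
        constructor
        · intro h; exact (by simp [tr] at h)
        · intro h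
          exact absurd hx (sem_core h).1
    · -- inductive step
      have hbind : runN (m+1) f = (runN m f).bind (fun t => tr t (f m)) := rfl
      rcases hrm : runN m f with _ | s0
      · have hnone : ∀ t, ¬ Sem t m f := fun t ht => by
          have := (ih hm f t).mpr ht
          rw [hrm] at this
          exact (by simp [tr] at this)
        constructor
        · intro h
          rw [hbind, hrm] at h
          exact (by simp [tr] at h)
        · intro hs
          obtain ⟨t, ht⟩ := sem_restrict hm (sem_core hs)
          exact absurd ht (hnone t)
      · have hs0 : Sem s0 m f := (ih hm f s0).mp hrm
        rw [hbind, hrm]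
        rcases htr : tr s0 (f m) with _ | s1
        · constructor
          · intro h
            rw [show (some s0).bind (fun t => tr t (f m)) = tr s0 (f m) from rfl, htr] at h
            exact (by simp [tr] at h)
          · intro hs
            exact (sem_step_dead hm hs0 htr s hs).elim
        · have hsound : Sem s1 (m+1) f := sem_step_sound hm hs0 htr
          constructor
          · intro h
            rw [show (some s0).bind (fun t => tr t (f m)) = tr s0 (f m) from rfl, htr] at h
            obtain rfl : s1 = s := Option.some.inj h
            exact hsound
          · intro hs
            obtain rfl : s1 = s := sem_excl hsound hs
            rw [show (some s0).bind (fun t => tr t (f m)) = tr s0 (f m) from rfl, htr]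

lemma validN_iff {n : ℕ} (hn : 1 ≤ n) (f : ℕ → Fin 3) :
    ValidN n f ↔ ∃ s, Sem s n f ∧ accb s = true := by
  have e1 : n - 1 + 1 = n := by omega
  have e3 : n - 1 - 1 = n - 2 := by omega
  constructor
  · rintro ⟨v0, v1, v2, v3⟩
    have hcore : CoreN n f := by
      refine ⟨v0, v1, ?_, ?_⟩
      · intro i hi hfi
        rcases v2 i (by omega) hfi with h | h
        · exact Or.inl h
        · exact Or.inr h.2
      · intro i hi hfi
        rcases v3 i (by omega) hfi with h | h
        · exact Or.inl h
        · exact Or.inr ⟨h.2.1, h.2.2 hi⟩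
    rcases fin3_tri (f (n-1)) with hb | hb | hb
    · rcases v2 (n-1) (by omega) hb with ⟨hpos, hp2⟩ | ⟨hlt, -⟩
      · rw [e3] at hp2
        by_cases hL : LeftOpt f (n-2)
        · exact ⟨ZO, ⟨hcore, hb, by omega, hp2, hL⟩, rfl⟩
        · exact ⟨ZG, ⟨hcore, hb, by omega, hp2, hL⟩, rfl⟩
      · rw [e1] at hlt; omega
    · exact ⟨O, ⟨hcore, hb⟩, rfl⟩
    · have hL : LeftOpt f (n-1) := by
        rcases v3 (n-1) (by omega) hb with h | ⟨hlt, -⟩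
        · exact h
        · rw [e1] at hlt; omega
      have hG : 2 ≤ n → f (n-2) = 2 → LeftOpt f (n-2) := by
        intro h2n hp2
        rcases v3 (n-2) (by omega) hp2 with h | ⟨-, hz, -⟩
        · exact h
        · rw [show n - 2 + 1 = n - 1 by omega] at hz
          exact clash hb hz (by decide)
      exact ⟨TM, ⟨hcore, hb, hL, hG⟩, rfl⟩
  · rintro ⟨s, hsem, hacc⟩
    obtain ⟨c0, c1, c2, c3⟩ := sem_core hsem
    have B1 : f (n-1) = 0 → 2 ≤ n ∧ f (n-2) = 2 := by
      intro hb
      cases s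
      case ZO => exact ⟨hsem.2.2.1, hsem.2.2.2.1⟩
      case ZG => exact ⟨hsem.2.2.1, hsem.2.2.2.1⟩
      case O => exact clash hsem.2 hb (by decide)
      case TM => exact clash hsem.2.1 hb (by decide)
      case I => exact hsem.elim
      case ZN => exact absurd hacc (by decide)
      case TU => exact absurd hacc (by decide)
    have B2 : f (n-1) = 2 → LeftOpt f (n-1) ∧ (2 ≤ n → f (n-2) = 2 → LeftOpt f (n-2)) := by
      intro hb
      cases s
      case TM => exact ⟨hsem.2.2.1, hsem.2.2.2⟩
      case ZO => exact clash hsem.2.1 hb (by decide)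
      case ZG => exact clash hsem.2.1 hb (by decide)
      case O => exact clash hsem.2 hb (by decide)
      case I => exact hsem.elim
      case ZN => exact absurd hacc (by decide)
      case TU => exact absurd hacc (by decide)
    refine ⟨c0, c1, ?_, ?_⟩
    · intro i hi hfi
      rcases Nat.lt_or_ge (i+1) n with h' | h'
      · rcases c2 i h' hfi with h | h
        · exact Or.inl h
        · exact Or.inr ⟨h', h⟩
      · have hi1 : i = n - 1 := by omega
        subst hi1
        obtain ⟨h2n, hp2⟩ := B1 hfi
        exact Or.inl ⟨by omega, by rw [e3]; exact hp2⟩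
    · intro i hi hfi
      rcases Nat.lt_or_ge (i+2) n with h' | h'
      · rcases c3 i h' hfi with h | h
        · exact Or.inl h
        · exact Or.inr ⟨by omega, h.1, fun _ => h.2⟩
      · rcases Nat.lt_or_ge (i+1) n with h'' | h''
        · have hi2 : i = n - 2 := by omega
          subst hi2
          rcases fin3_tri (f (n-1)) with hb | hb | hb
          · refine Or.inr ⟨h'', ?_, fun hcon => by omega⟩
            rw [show n - 2 + 1 = n - 1 by omega]
            exact hb
          · exfalso
            have := (c1 (n-1) (by omega) hb).1 (by omega)
            rw [e3] at this
            exact this hfi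
          · exact Or.inl ((B2 hb).2 (by omega) hfi)
        · have hi1 : i = n - 1 := by omega
          subst hi1
          exact Or.inl (B2 hfi).1

def extF {n : ℕ} (F : Fin n → Fin 3) : ℕ → Fin 3 := fun i => if h : i < n then F ⟨i, h⟩ else 0

lemma extF_lt {n : ℕ} (F : Fin n → Fin 3) {i : ℕ} (h : i < n) : extF F i = F ⟨i, h⟩ :=
  dif_pos h

lemma extF_fin {n : ℕ} (F : Fin n → Fin 3) (u : Fin n) : extF F u.val = F u := by
  rw [extF_lt F u.isLt]

lemma adj_mk {n : ℕ} {a b : ℕ} (ha : a < n) (hb : b < n) (h : a + 1 = b ∨ b + 1 = a) :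
    (SimpleGraph.pathGraph n).Adj ⟨a, ha⟩ ⟨b, hb⟩ := by
  rw [SimpleGraph.pathGraph_adj]
  exact h

lemma adj_dest {n : ℕ} {v u : Fin n} (h : (SimpleGraph.pathGraph n).Adj v u) :
    v.val + 1 = u.val ∨ u.val + 1 = v.val :=
  SimpleGraph.pathGraph_adj.mp h

lemma minChar_validN {n : ℕ} (hn : 1 ≤ n) (F : Fin n → Fin 3) :
    (IsRDF (SimpleGraph.pathGraph n) F ∧
     (∀ v, F v = 1 → ∀ u, (SimpleGraph.pathGraph n).Adj v u → F u ≠ 2) ∧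
     (∀ v, F v = 2 → ∃ u, (SimpleGraph.pathGraph n).Adj v u ∧ F u = 0 ∧
        ∀ w, (SimpleGraph.pathGraph n).Adj u w → w ≠ v → F w ≠ 2) ∧
     (∀ h : 0 < n, F ⟨0, h⟩ ≠ 2)) ↔ ValidN n (extF F) := by
  constructor
  · rintro ⟨hr, h1, h2, h0⟩
    refine ⟨by rw [extF_lt F (by omega : (0:ℕ) < n)]; exact h0 (by omega), ?_, ?_, ?_⟩
    · intro i hi hfi
      rw [extF_lt F hi] at hfi
      constructor
      · intro hpos
        rw [extF_lt F (show i - 1 < n by omega)]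
        exact h1 _ hfi _ (adj_mk hi (by omega) (by omega))
      · intro hlt
        rw [extF_lt F (show i + 1 < n by omega)]
        exact h1 _ hfi _ (adj_mk hi (by omega) (by omega))
    · intro i hi hfi
      rw [extF_lt F hi] at hfi
      obtain ⟨u, hadj, hu⟩ := hr _ hfi
      rcases adj_dest hadj with h | h
      · have hu' : u.val = i + 1 := by simp at h; omega
        refine Or.inr ⟨by omega, ?_⟩
        rw [extF_lt F (show i + 1 < n by omega),
          show (⟨i + 1, by omega⟩ : Fin n) = u from Fin.ext (by simp [hu'])]
        exact hu
      · have hu' : u.val = i - 1 := by simp at h; omega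
        have hpos : 0 < i := by simp at h; omega
        refine Or.inl ⟨hpos, ?_⟩
        rw [extF_lt F (show i - 1 < n by omega),
          show (⟨i - 1, by omega⟩ : Fin n) = u from Fin.ext (by simp [hu'])]
        exact hu
    · intro i hi hfi
      rw [extF_lt F hi] at hfi
      obtain ⟨u, hadj, hu0, hpriv⟩ := h2 _ hfi
      rcases adj_dest hadj with h | h
      · have hu' : u.val = i + 1 := by simp at h; omega
        have hlt1 : i + 1 < n := by have := u.isLt; omega
        have hu1 : u = ⟨i + 1, hlt1⟩ := Fin.ext (by simp [hu'])
        rw [hu1] at hu0 hpriv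
        refine Or.inr ⟨hlt1, ?_, ?_⟩
        · rw [extF_lt F hlt1]
          exact hu0
        · intro hlt
          rw [extF_lt F (show i + 2 < n by omega)]
          exact hpriv ⟨i + 2, by omega⟩ (adj_mk _ _ (Or.inl rfl))
            (Fin.ne_of_val_ne (show i + 2 ≠ i by omega))
      · have hu' : u.val = i - 1 := by simp at h; omega
        have hpos : 0 < i := by simp at h; omega
        have hu1 : u = ⟨i - 1, by omega⟩ := Fin.ext (by simp [hu'])
        rw [hu1] at hu0 hpriv
        refine Or.inl ⟨hpos, ?_, ?_⟩
        · rw [extF_lt F (show i - 1 < n by omega)]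
          exact hu0
        · intro h2i
          rw [extF_lt F (show i - 2 < n by omega)]
          exact hpriv ⟨i - 2, by omega⟩ (adj_mk _ _ (Or.inr (show i - 2 + 1 = i - 1 by omega)))
            (Fin.ne_of_val_ne (show i - 2 ≠ i by omega))
  · rintro ⟨v0, v1, v2, v3⟩
    refine ⟨?_, ?_, ?_, ?_⟩
    · intro v hv
      have hv' : extF F v.val = 0 := by rw [extF_fin]; exact hv
      rcases v2 v.val v.isLt hv' with ⟨hpos, hp⟩ | ⟨hlt, hp⟩
      · refine ⟨⟨v.val - 1, by omega⟩, ?_, ?_⟩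
        · rw [SimpleGraph.pathGraph_adj]
          exact Or.inr (show v.val - 1 + 1 = v.val by omega)
        · rw [← extF_lt F (show v.val - 1 < n by omega)]
          exact hp
      · refine ⟨⟨v.val + 1, hlt⟩, ?_, ?_⟩
        · rw [SimpleGraph.pathGraph_adj]
          exact Or.inl rfl
        · rw [← extF_lt F hlt]
          exact hp
    · intro v hv u hadj hu2
      have hv' : extF F v.val = 1 := by rw [extF_fin]; exact hv
      have hcl := v1 v.val v.isLt hv'
      rcases adj_dest hadj with h | h
      · have h2 : extF F (v.val + 1) ≠ 2 := hcl.2 (by have := u.isLt; omega)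
        rw [show v.val + 1 = u.val from h, extF_fin] at h2
        exact h2 hu2
      · have h2 : extF F (v.val - 1) ≠ 2 := hcl.1 (by omega)
        rw [show v.val - 1 = u.val by omega, extF_fin] at h2
        exact h2 hu2
    · intro v hv
      have hv' : extF F v.val = 2 := by rw [extF_fin]; exact hv
      rcases v3 v.val v.isLt hv' with ⟨hpos, hz, hq⟩ | ⟨hlt, hz, hq⟩
      · refine ⟨⟨v.val - 1, by omega⟩, ?_, ?_, ?_⟩
        · rw [SimpleGraph.pathGraph_adj]
          exact Or.inr (show v.val - 1 + 1 = v.val by omega)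
        · rw [← extF_lt F (show v.val - 1 < n by omega)]
          exact hz
        · intro w hadjw hwv
          rcases adj_dest hadjw with h | h
          · exact absurd (Fin.ext (show w.val = v.val by simp at h; omega)) hwv
          · have h' : w.val + 1 = v.val - 1 := by simpa using h
            have hq' := hq (by omega)
            rw [show v.val - 2 = w.val by omega, extF_fin] at hq'
            exact hq'
      · refine ⟨⟨v.val + 1, hlt⟩, ?_, ?_, ?_⟩
        · rw [SimpleGraph.pathGraph_adj]
          exact Or.inl rfl
        · rw [← extF_lt F hlt]
          exact hz
        · intro w hadjw hwv
          rcases adj_dest hadjw with h | h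
          · have h' : v.val + 2 = w.val := by simp at h; omega
            have hq' := hq (by have := w.isLt; omega)
            rw [show v.val + 2 = w.val from h', extF_fin] at hq'
            exact hq'
          · exact absurd (Fin.ext (show w.val = v.val by simp at h; omega)) hwv
    · intro h
      rw [← extF_lt F h]
      exact v0

def accv : St → ℕ := fun s => if accb s then 1 else 0

def rowOf (r : St → ℕ) : Option St → ℕ
  | none => 0
  | some s => r s

def rstep (r : St → ℕ) : St → ℕ :=
  fun s => rowOf r (tr s 0) + rowOf r (tr s 1) + rowOf r (tr s 2)

def cnt (n : ℕ) (s : St) : ℕ :=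
  (Finset.univ.filter fun F : Fin n → Fin 3 => runN n (extF F) = some s).card

lemma sum_opt (r : St → ℕ) (o : Option St) :
    ∑ s : St, (if o = some s then r s else 0) = rowOf r o := by
  cases o with
  | none => simp [rowOf]
  | some t =>
    simp only [Option.some.injEq, rowOf]
    rw [Finset.sum_ite_eq]
    simp

lemma sum_rowOf (n : ℕ) (r : St → ℕ) :
    ∑ F : Fin n → Fin 3, rowOf r (runN n (extF F)) = ∑ s : St, r s * cnt n s := by
  have hc : ∀ s : St, r s * cnt n s
      = ∑ F : Fin n → Fin 3, (if runN n (extF F) = some s then r s else 0) := by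
    intro s
    rw [cnt, Finset.card_filter, Finset.mul_sum]
    refine Finset.sum_congr rfl fun F _ => ?_
    by_cases h : runN n (extF F) = some s <;> simp [h]
  calc ∑ F : Fin n → Fin 3, rowOf r (runN n (extF F))
      = ∑ F : Fin n → Fin 3, ∑ s : St, (if runN n (extF F) = some s then r s else 0) :=
        Finset.sum_congr rfl fun F _ => (sum_opt r _).symm
    _ = ∑ s : St, ∑ F : Fin n → Fin 3, (if runN n (extF F) = some s then r s else 0) :=
        Finset.sum_comm
    _ = ∑ s : St, r s * cnt n s := Finset.sum_congr rfl fun s _ => (hc s).symm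

lemma runN_snoc {n : ℕ} (g : Fin n → Fin 3) (x : Fin 3) :
    runN (n+1) (extF (Fin.snoc g x)) = (runN n (extF g)).bind fun t => tr t x := by
  have h1 : ∀ i < n, extF (Fin.snoc g x : Fin (n+1) → Fin 3) i = extF g i := by
    intro i hi
    rw [extF_lt _ (show i < n + 1 by omega), extF_lt g hi]
    have e : (⟨i, show i < n + 1 by omega⟩ : Fin (n+1)) = Fin.castSucc ⟨i, hi⟩ := rfl
    rw [e, Fin.snoc_castSucc]
  have h2 : extF (Fin.snoc g x : Fin (n+1) → Fin 3) n = x := by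
    rw [extF_lt _ (Nat.lt_succ_self n)]
    have e : (⟨n, Nat.lt_succ_self n⟩ : Fin (n+1)) = Fin.last n := rfl
    rw [e, Fin.snoc_last]
  show (runN n (extF (Fin.snoc g x))).bind (fun t => tr t (extF (Fin.snoc g x) n)) = _
  rw [runN_congr h1, h2]

def snocEquiv (n : ℕ) : ((Fin n → Fin 3) × Fin 3) ≃ (Fin (n+1) → Fin 3) :=
  ⟨fun p => Fin.snoc p.1 p.2, fun f => (Fin.init f, f (Fin.last n)),
   fun p => by simp, fun f => by simp⟩

lemma cnt_pair (n : ℕ) (r : St → ℕ) :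
    ∑ s : St, r s * cnt (n+1) s = ∑ s : St, rstep r s * cnt n s := by
  rw [← sum_rowOf, ← sum_rowOf]
  rw [← Equiv.sum_comp (snocEquiv n) (fun F => rowOf r (runN (n+1) (extF F))), Fintype.sum_prod_type]
  refine Finset.sum_congr rfl fun g _ => ?_
  have hx : ∀ x : Fin 3, rowOf r (runN (n+1) (extF (snocEquiv n (g, x))))
      = rowOf r ((runN n (extF g)).bind fun t => tr t x) := fun x => by
    show rowOf r (runN (n+1) (extF (Fin.snoc g x))) = _
    rw [runN_snoc]
  rw [Fin.sum_univ_three, hx 0, hx 1, hx 2]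
  cases ho : runN n (extF g) with
  | none => simp [rowOf]
  | some t => simp [rowOf, rstep]

lemma cnt_I {m : ℕ} (hm : 1 ≤ m) : cnt m I = 0 := by
  rw [cnt, Finset.card_eq_zero, Finset.filter_eq_empty_iff]
  exact fun F _ => runN_ne_I hm _

lemma shift : ∀ (k m : ℕ) (r : St → ℕ),
    ∑ s : St, r s * cnt (m + k) s = ∑ s : St, (rstep^[k] r) s * cnt m s := by
  intro k
  induction k with
  | zero => intro m r; simp
  | succ k ih =>
    intro m r
    have e : m + (k + 1) = (m + k) + 1 := by omega
    rw [e, cnt_pair (m + k) r, ih m (rstep r)]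
    simp only [Function.iterate_succ_apply]

lemma ident : ∀ s : St, s ≠ I →
    rstep^[5] accv s = rstep^[4] accv s + rstep^[2] accv s + rstep accv s + accv s := by
  decide

lemma CPbar2_eq {n : ℕ} (hn : 1 ≤ n) : CPbar2 n = ∑ s : St, accv s * cnt n s := by
  have hset : {f : Fin n → Fin 3 | IsMinimalRDF (SimpleGraph.pathGraph n) f ∧
      ∀ h : 0 < n, f ⟨0, h⟩ ≠ 2} =
      ↑(Finset.univ.filter fun F : Fin n → Fin 3 =>
        ∃ s, runN n (extF F) = some s ∧ accb s = true) := by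
    ext F
    simp only [Set.mem_setOf_eq, Finset.coe_filter, Finset.mem_univ, true_and]
    rw [isMinimalRDF_iff]
    constructor
    · rintro ⟨⟨hr, h1, h2⟩, h0⟩
      have hv := (minChar_validN hn F).mp ⟨hr, h1, h2, h0⟩
      rcases (validN_iff hn _).mp hv with ⟨s, hs, hacc⟩
      exact ⟨s, (runN_sem n hn _ s).mpr hs, hacc⟩
    · rintro ⟨s, hrun, hacc⟩
      have hv := (validN_iff hn _).mpr ⟨s, (runN_sem n hn _ s).mp hrun, hacc⟩
      obtain ⟨hr, h1, h2, h0⟩ := (minChar_validN hn F).mpr hv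
      exact ⟨⟨hr, h1, h2⟩, h0⟩
  rw [CPbar2, hset, Set.ncard_coe_finset, Finset.card_filter, ← sum_rowOf]
  refine Finset.sum_congr rfl fun F _ => ?_
  cases ho : runN n (extF F) with
  | none => simp [ho, rowOf]
  | some t => simp [ho, rowOf, accv]


/-- For `n ≥ 6`, the pure recurrence
`C_{P,2̄,n} = C_{P,2̄,n-1} + C_{P,2̄,n-3} + C_{P,2̄,n-4} + C_{P,2̄,n-5}` holds. -/
theorem CPbar2_pure_recurrence (n : ℕ) (hn : 6 ≤ n) :
    CPbar2 n = CPbar2 (n - 1) + CPbar2 (n - 3) + CPbar2 (n - 4) + CPbar2 (n - 5) := by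
  set m := n - 5 with hm
  have hm1 : 1 ≤ m := by omega
  have h5 : CPbar2 n = ∑ s : St, (rstep^[5] accv) s * cnt m s := by
    have := shift 5 m accv
    rw [show m + 5 = n by omega] at this
    rw [CPbar2_eq (by omega), this]
  have h4 : CPbar2 (n - 1) = ∑ s : St, (rstep^[4] accv) s * cnt m s := by
    have := shift 4 m accv
    rw [show m + 4 = n - 1 by omega] at this
    rw [CPbar2_eq (by omega), this]
  have h2 : CPbar2 (n - 3) = ∑ s : St, (rstep^[2] accv) s * cnt m s := by
    have := shift 2 m accv
    rw [show m + 2 = n - 3 by omega] at this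
    rw [CPbar2_eq (by omega), this]
  have h1 : CPbar2 (n - 4) = ∑ s : St, (rstep^[1] accv) s * cnt m s := by
    have := shift 1 m accv
    rw [show m + 1 = n - 4 by omega] at this
    rw [CPbar2_eq (by omega), this]
  have h0 : CPbar2 (n - 5) = ∑ s : St, accv s * cnt m s := by
    rw [CPbar2_eq (by omega)]
  rw [h5, h4, h2, h1, h0]
  have key : ∀ s : St, (rstep^[5] accv) s * cnt m s =
      (rstep^[4] accv) s * cnt m s + (rstep^[2] accv) s * cnt m s +
      (rstep^[1] accv) s * cnt m s + accv s * cnt m s := by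
    intro s
    by_cases hs : s = I
    · subst hs
      rw [cnt_I hm1]
      ring
    · rw [Function.iterate_one, ident s hs]
      ring
  rw [Finset.sum_congr rfl fun s _ => key s]
  rw [Finset.sum_add_distrib, Finset.sum_add_distrib, Finset.sum_add_distrib]
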